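/- Let H be the abelian group (Multiplicative (ZMod 3 × ZMod 3)), the direct product of two cyclic groups of order 3. Then there is a ring isomorphism MonoidAlgebra (ZMod 2) H ≃ (ZMod 2) × (Fin 4 → GaloisField 2 2); that is, the binary group algebra of H decomposes as a product of one copy of the field with 2 elements and four copies of the field with 4 elements, corresponding to the five conjugacy classes of H under squaring, which have sizes 1, 2, 2, 2 and 2. -/

import Mathlib

namespace Stmt16Aux

noncomputable section

abbrev F4 := GaloisField 2 2
abbrev G3 := ZMod 3 × ZMod 3

def eco : Fin 4 → ZMod 3 × ZMod 3
  | 0 => (1, 0) | 1 => (0, 1) | 2 => (1, 1) | 3 => (1, 2)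

def e (i : Fin 4) (g : G3) : ZMod 3 := (eco i).1 * g.1 + (eco i).2 * g.2

lemma e_add (i : Fin 4) (a b : G3) : e i (a + b) = e i a + e i b := by
  simp only [e, Prod.fst_add, Prod.snd_add]; ring

lemma e_zero (i : Fin 4) : e i 0 = 0 := by simp [e]

def F (i : Fin 4) (t : ZMod 3) : Finset G3 := Finset.univ.filter fun g => e i g = t

lemma hcard : ∀ i t, (F i t).card = 3 := by decide

lemma himg : ∀ i j : Fin 4, i ≠ j → ∀ t : ZMod 3, (F i t).image (e j) = Finset.univ := by decide

lemma hinj : ∀ i j : Fin 4, i ≠ j → ∀ t : ZMod 3,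
    ∀ x ∈ F i t, ∀ y ∈ F i t, e j x = e j y → x = y := by decide

lemma exists_omega : ∃ ω : F4, ω ^ 3 = 1 ∧ ω ≠ 1 ∧ ω ≠ 0 := by
  have hc : Nat.card F4 = 4 := GaloisField.card 2 2 (by norm_num)
  have hu : Nat.card F4ˣ = 3 := by rw [Nat.card_units, hc]
  have : Nontrivial F4ˣ := by
    rcases subsingleton_or_nontrivial F4ˣ with h | h
    · rw [Nat.card_unique] at hu; omega
    · exact h
  obtain ⟨u, hu1⟩ := exists_ne (1 : F4ˣ)
  refine ⟨(u : F4), ?_, ?_, Units.ne_zero u⟩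
  · have h3 : u ^ 3 = 1 := by rw [← hu]; exact pow_card_eq_one'
    calc (u:F4) ^ 3 = ((u ^ 3 : F4ˣ) : F4) := by push_cast; ring
    _ = 1 := by rw [h3]; rfl
  · exact fun h => hu1 (Units.ext h)

lemma char2 : (2 : F4) = 0 := by
  have := CharP.cast_eq_zero F4 2
  exact_mod_cast this

variable {ω : F4}

lemma sum_omega (hω3 : ω ^ 3 = 1) (hω1 : ω ≠ 1) : 1 + ω + ω ^ 2 = 0 := by
  have hfactor : (ω - 1) * (ω ^ 2 + ω + 1) = 0 := by linear_combination hω3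
  rcases mul_eq_zero.mp hfactor with h | h
  · exact absurd (sub_eq_zero.mp h) hω1
  · linear_combination h

lemma zsum (hω3 : ω ^ 3 = 1) (hω1 : ω ≠ 1) : ∑ s : ZMod 3, ω ^ s.val = 0 := by
  have huniv : (Finset.univ : Finset (ZMod 3)) = {0, 1, 2} := by decide
  rw [huniv, Finset.sum_insert (by decide), Finset.sum_insert (by decide),
    Finset.sum_singleton]
  have h0 : (0 : ZMod 3).val = 0 := rfl
  have h1 : (1 : ZMod 3).val = 1 := rfl
  have h2 : (2 : ZMod 3).val = 2 := rfl
  rw [h0, h1, h2, pow_zero]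
  linear_combination sum_omega hω3 hω1

/-- The character monoid hom. -/
def f (hω3 : ω ^ 3 = 1) : Multiplicative G3 →* ZMod 2 × (Fin 4 → F4) where
  toFun g := (1, fun i => AddChar.zmodChar 3 hω3 (e i g.toAdd))
  map_one' := by
    refine Prod.ext rfl ?_
    funext i
    show AddChar.zmodChar 3 hω3 (e i (0 : G3)) = 1
    rw [e_zero]; exact AddChar.map_zero_eq_one _
  map_mul' a b := by
    refine Prod.ext (by simp) ?_
    funext i
    show AddChar.zmodChar 3 hω3 (e i (a.toAdd + b.toAdd)) = _
    rw [e_add, AddChar.map_add_eq_mul]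
    rfl

def κ : ZMod 2 →+* ZMod 2 × (Fin 4 → F4) :=
  (RingHom.id (ZMod 2)).prod (Pi.ringHom fun _ => ZMod.castHom dvd_rfl F4)

def φ (hω3 : ω ^ 3 = 1) : MonoidAlgebra (ZMod 2) (Multiplicative G3) →+* ZMod 2 × (Fin 4 → F4) :=
  MonoidAlgebra.liftNCRingHom κ (f hω3) fun _ _ => Commute.all _ _

lemma phi_single (hω3 : ω ^ 3 = 1) (g : Multiplicative G3) :
    φ hω3 (MonoidAlgebra.single g (1 : ZMod 2)) = f hω3 g := by
  show MonoidAlgebra.liftNC (κ.toAddMonoidHom) (f hω3) (MonoidAlgebra.single g 1) = _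
  rw [MonoidAlgebra.liftNC_single]
  simp [κ]
  exact one_mul _

def w (i : Fin 4) (t : ZMod 3) : MonoidAlgebra (ZMod 2) (Multiplicative G3) :=
  ∑ g ∈ F i t, MonoidAlgebra.single (Multiplicative.ofAdd g) (1 : ZMod 2)

lemma phi_w (hω3 : ω ^ 3 = 1) (hω1 : ω ≠ 1) (i : Fin 4) (t : ZMod 3) :
    φ hω3 (w i t) = (1, Pi.single i (ω ^ t.val)) := by
  have h3F : (3 : F4) = 1 := by linear_combination char2
  rw [w, map_sum]
  have step : ∀ g ∈ F i t,
      φ hω3 (MonoidAlgebra.single (Multiplicative.ofAdd g) (1 : ZMod 2))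
        = (1, fun j => ω ^ (e j g).val) := by
    intro g _
    rw [phi_single]
    rfl
  rw [Finset.sum_congr rfl step]
  refine Prod.ext ?_ ?_
  · rw [Prod.fst_sum]
    simp only [Finset.sum_const, hcard i t]
    decide
  · rw [Prod.snd_sum]
    funext j
    dsimp only
    rw [Finset.sum_apply]
    rcases eq_or_ne j i with rfl | hne
    · have : ∀ g ∈ F j t, ω ^ (e j g).val = ω ^ t.val := by
        intro g hg
        rw [(Finset.mem_filter.mp hg).2]
      rw [Finset.sum_congr rfl this, Finset.sum_const, hcard j t]
      rw [Pi.single_apply, if_pos rfl]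
      rw [nsmul_eq_mul]
      push_cast
      linear_combination (ω ^ t.val) * h3F
    · have him := Finset.sum_image (g := e j) (f := fun s : ZMod 3 => ω ^ s.val)
        (hinj i j (Ne.symm hne) t)
      rw [Pi.single_apply, if_neg hne, ← him, himg i j (Ne.symm hne) t]
      exact zsum hω3 hω1

lemma four_elts (hω3 : ω ^ 3 = 1) (hω1 : ω ≠ 1) (hω0 : ω ≠ 0) (x : F4) :
    x = 0 ∨ x = 1 ∨ x = ω ∨ x = 1 + ω := by
  classical
  letI : Fintype F4 := Fintype.ofFinite _
  have hcard4 : Fintype.card F4 = 4 := by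
    rw [← Nat.card_eq_fintype_card]; exact GaloisField.card 2 2 (by norm_num)
  have h10 : (1 : F4) + ω ≠ 0 := fun h => hω1 (by linear_combination h - char2)
  have hne3 : (1 : F4) + ω ≠ 1 := fun h => hω0 (by linear_combination h)
  have hne4 : (1 : F4) + ω ≠ ω := fun h => (one_ne_zero (α := F4)) (by linear_combination h)
  have hS : ({0, 1, ω, 1 + ω} : Finset F4).card = 4 := by
    rw [Finset.card_insert_of_notMem (by
          simp only [Finset.mem_insert, Finset.mem_singleton]
          push_neg
          exact ⟨zero_ne_one, fun h => hω0 h.symm, fun h => h10 h.symm⟩),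
        Finset.card_insert_of_notMem (by
          simp only [Finset.mem_insert, Finset.mem_singleton]
          push_neg
          exact ⟨fun h => hω1 h.symm, fun h => hne3 h.symm⟩),
        Finset.card_insert_of_notMem (by
          simp only [Finset.mem_singleton]
          exact fun h => hne4 h.symm),
        Finset.card_singleton]
  have huniv : ({0, 1, ω, 1 + ω} : Finset F4) = Finset.univ :=
    Finset.eq_univ_of_card _ (by rw [hS, hcard4])
  have hx : x ∈ ({0, 1, ω, 1 + ω} : Finset F4) := huniv ▸ Finset.mem_univ x
  simpa only [Finset.mem_insert, Finset.mem_singleton] using hx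

lemma card_eq : Nat.card (MonoidAlgebra (ZMod 2) (Multiplicative G3))
    = Nat.card (ZMod 2 × (Fin 4 → F4)) := by
  have h1 : Nat.card (MonoidAlgebra (ZMod 2) (Multiplicative G3)) = 2 ^ 9 :=
    calc Nat.card (MonoidAlgebra (ZMod 2) (Multiplicative G3))
        = Nat.card (Multiplicative G3 → ZMod 2) := Nat.card_congr (MonoidAlgebra.coeffEquiv.trans Finsupp.equivFunOnFinite)
      _ = Nat.card (ZMod 2) ^ Nat.card (Multiplicative G3) := Nat.card_fun
      _ = 2 ^ 9 := by
          rw [Nat.card_zmod, Nat.card_congr (Multiplicative.toAdd (α := G3)),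
            Nat.card_prod, Nat.card_zmod]
  have h2 : Nat.card (ZMod 2 × (Fin 4 → F4)) = 2 ^ 9 := by
    rw [Nat.card_prod, Nat.card_zmod, Nat.card_fun, GaloisField.card 2 2 (by norm_num),
      Nat.card_eq_fintype_card (α := Fin 4)]
    norm_num
  rw [h1, h2]

end

end Stmt16Aux

/-- The binary group algebra of `H = C₃ × C₃` decomposes as a product of
one copy of the field with `2` elements and four copies of the field with `4` elements. -/
theorem stmt16 :
    Nonempty (MonoidAlgebra (ZMod 2) (Multiplicative (ZMod 3 × ZMod 3))
      ≃+* (ZMod 2) × (Fin 4 → GaloisField 2 2)) := by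
  classical
  obtain ⟨ω, hω3, hω1, hω0⟩ := Stmt16Aux.exists_omega
  have hsum : 1 + ω + ω ^ 2 = 0 := Stmt16Aux.sum_omega hω3 hω1
  have hchar := Stmt16Aux.char2
  set Φ := Stmt16Aux.φ hω3 with hΦ
  have hmem : ∀ (i : Fin 4) (t : ZMod 3),
      (((1 : ZMod 2), Pi.single i (ω ^ t.val)) : ZMod 2 × (Fin 4 → Stmt16Aux.F4)) ∈ Φ.range :=
    fun i t => ⟨_, Stmt16Aux.phi_w hω3 hω1 i t⟩
  have hv0 : ((0 : ZMod 3)).val = 0 := rfl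
  have hv1 : ((1 : ZMod 3)).val = 1 := rfl
  have hv2 : ((2 : ZMod 3)).val = 2 := rfl
  have hA : (((1 : ZMod 2), (0 : Fin 4 → Stmt16Aux.F4)) : ZMod 2 × (Fin 4 → Stmt16Aux.F4))
      ∈ Φ.range := by
    have h := add_mem (add_mem (hmem 0 0) (hmem 0 1)) (hmem 0 2)
    have heq : (((1 : ZMod 2), Pi.single (0 : Fin 4) (ω ^ (0 : ZMod 3).val))
          : ZMod 2 × (Fin 4 → Stmt16Aux.F4))
        + ((1 : ZMod 2), Pi.single (0 : Fin 4) (ω ^ (1 : ZMod 3).val))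
        + ((1 : ZMod 2), Pi.single (0 : Fin 4) (ω ^ (2 : ZMod 3).val))
        = ((1 : ZMod 2), (0 : Fin 4 → Stmt16Aux.F4)) := by
      simp only [Prod.mk_add_mk, Prod.mk.injEq]
      refine ⟨by decide, ?_⟩
      rw [← Pi.single_add, ← Pi.single_add, hv0, hv1, hv2]
      have hz : ω ^ 0 + ω ^ 1 + ω ^ 2 = 0 := by linear_combination hsum
      rw [hz, Pi.single_zero]
    rw [← heq]
    exact h
  have hB : ∀ i : Fin 4, (((0 : ZMod 2), Pi.single i (1 : Stmt16Aux.F4))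
      : ZMod 2 × (Fin 4 → Stmt16Aux.F4)) ∈ Φ.range := by
    intro i
    have h := sub_mem (hmem i 0) hA
    have heq : (((1 : ZMod 2), Pi.single i (ω ^ (0 : ZMod 3).val))
          : ZMod 2 × (Fin 4 → Stmt16Aux.F4))
        - ((1 : ZMod 2), (0 : Fin 4 → Stmt16Aux.F4))
        = ((0 : ZMod 2), Pi.single i (1 : Stmt16Aux.F4)) := by
      simp only [Prod.mk_sub_mk, Prod.mk.injEq]
      refine ⟨by decide, ?_⟩
      rw [sub_zero, hv0, pow_zero]
    rw [← heq]
    exact h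
  have hC : ∀ i : Fin 4, (((0 : ZMod 2), Pi.single i ω)
      : ZMod 2 × (Fin 4 → Stmt16Aux.F4)) ∈ Φ.range := by
    intro i
    have h := add_mem (hmem i 0) (hmem i 2)
    have heq : (((1 : ZMod 2), Pi.single i (ω ^ (0 : ZMod 3).val))
          : ZMod 2 × (Fin 4 → Stmt16Aux.F4))
        + ((1 : ZMod 2), Pi.single i (ω ^ (2 : ZMod 3).val))
        = ((0 : ZMod 2), Pi.single i ω) := by
      simp only [Prod.mk_add_mk, Prod.mk.injEq]
      refine ⟨by decide, ?_⟩
      rw [← Pi.single_add, hv0, hv2]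
      have hoo : ω ^ 0 + ω ^ 2 = ω := by linear_combination hsum - ω * hchar
      rw [hoo]
    rw [← heq]
    exact h
  have hD : ∀ (i : Fin 4) (x : Stmt16Aux.F4),
      (((0 : ZMod 2), Pi.single i x) : ZMod 2 × (Fin 4 → Stmt16Aux.F4)) ∈ Φ.range := by
    intro i x
    rcases Stmt16Aux.four_elts hω3 hω1 hω0 x with rfl | rfl | rfl | rfl
    · have hz : (((0 : ZMod 2), Pi.single i (0 : Stmt16Aux.F4))
          : ZMod 2 × (Fin 4 → Stmt16Aux.F4)) = 0 := by
        rw [Pi.single_zero]; rfl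
      rw [hz]; exact zero_mem _
    · exact hB i
    · exact hC i
    · have h := add_mem (hB i) (hC i)
      have heq : (((0 : ZMod 2), Pi.single i (1 : Stmt16Aux.F4))
            : ZMod 2 × (Fin 4 → Stmt16Aux.F4))
          + ((0 : ZMod 2), Pi.single i ω)
          = ((0 : ZMod 2), Pi.single i (1 + ω)) := by
        simp only [Prod.mk_add_mk, Prod.mk.injEq]
        exact ⟨by decide, by rw [← Pi.single_add]⟩
      rw [← heq]
      exact h
  have hsurj : Function.Surjective Φ := by
    rintro ⟨c, v⟩
    have hv : (((0 : ZMod 2), v) : ZMod 2 × (Fin 4 → Stmt16Aux.F4)) ∈ Φ.range := by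
      have hveq : (((0 : ZMod 2), v) : ZMod 2 × (Fin 4 → Stmt16Aux.F4))
          = ∑ i : Fin 4, ((0 : ZMod 2), Pi.single i (v i)) := by
        refine Prod.ext ?_ ?_
        · rw [Prod.fst_sum]; simp
        · rw [Prod.snd_sum]; exact (Finset.univ_sum_single v).symm
      rw [hveq]
      exact sum_mem fun i _ => hD i (v i)
    have hc : ((c, (0 : Fin 4 → Stmt16Aux.F4)) : ZMod 2 × (Fin 4 → Stmt16Aux.F4))
        ∈ Φ.range := by
      rcases (by decide : ∀ c : ZMod 2, c = 0 ∨ c = 1) c with rfl | rfl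
      · exact zero_mem _
      · exact hA
    have hfinal : ((c, v) : ZMod 2 × (Fin 4 → Stmt16Aux.F4))
        = (c, (0 : Fin 4 → Stmt16Aux.F4)) + ((0 : ZMod 2), v) := by
      simp only [Prod.mk_add_mk, Prod.mk.injEq]
      exact ⟨by simp, by simp⟩
    obtain ⟨a, ha⟩ := RingHom.mem_range.mp (hfinal ▸ add_mem hc hv)
    exact ⟨a, ha⟩
  haveI : Finite (MonoidAlgebra (ZMod 2) (Multiplicative Stmt16Aux.G3)) :=
    Finite.of_equiv _ (MonoidAlgebra.coeffEquiv.trans (Finsupp.equivFunOnFinite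
      (α := Multiplicative Stmt16Aux.G3) (M := ZMod 2))).symm
  have hbij : Function.Bijective Φ :=
    (Nat.bijective_iff_surjective_and_card Φ).mpr ⟨hsurj, Stmt16Aux.card_eq⟩
  exact ⟨RingEquiv.ofBijective Φ hbij⟩
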